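/- There is an absolute constant C such that for every s ∈ (0,1], the function R[L_s](y) := −(1/π)∫_ℝ L_s'(y−α)·[ (⨍_α L_s(y))² − L_s(y)² ] / [ 1 + (⨍_α L_s(y))² ] dα/α satisfies ( ∫_ℝ |R[L_s](y)|^{4/3} dy )^{3/4} + ( ∫_ℝ |R[L_s](y)|² dy )^{1/2} ≤ C·s³. -/

import Mathlib

open MeasureTheory Real Set Filter

/-- Sliding average `⨍_α f(y) = (1/α) ∫_{y-α}^{y} f(z) dz`. -/
noncomputable def fint (α : ℝ) (f : ℝ → ℝ) (y : ℝ) : ℝ :=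
  (1 / α) * ∫ z in (y - α)..y, f z

/-- Finite difference slope `Δ_α f(y) = (f(y) - f(y-α))/α`. -/
noncomputable def slopeOp (α : ℝ) (f : ℝ → ℝ) (y : ℝ) : ℝ :=
  (f y - f (y - α)) / α

/-- The profile `L_s(y) = (2s/π) arctan((1+s²/3) y)`. -/
noncomputable def Ls (s y : ℝ) : ℝ := (2 * s / Real.pi) * Real.arctan ((1 + s ^ 2 / 3) * y)

/-- `δ_α[f,g](y) = ⨍_α f ⨍_α g - ⨍_{-α} f ⨍_{-α} g`. -/
noncomputable def deltaOp (α : ℝ) (f g : ℝ → ℝ) (y : ℝ) : ℝ :=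
  fint α f y * fint α g y - fint (-α) f y * fint (-α) g y

/-- `J_α[f,g](y) = ⨍_α f ⨍_α g - 2 f g + ⨍_{-α} f ⨍_{-α} g`. -/
noncomputable def Jop (α : ℝ) (f g : ℝ → ℝ) (y : ℝ) : ℝ :=
  fint α f y * fint α g y - 2 * f y * g y + fint (-α) f y * fint (-α) g y

/-- The `H¹` norm `(∫ g² + ∫ (g')²)^{1/2}`. -/
noncomputable def H1norm (g : ℝ → ℝ) : ℝ :=
  Real.sqrt ((∫ y : ℝ, g y ^ 2) + ∫ y : ℝ, deriv g y ^ 2)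

/-- The semilinear term `R[L_s]`. -/
noncomputable def RLs (s y : ℝ) : ℝ :=
  -(1 / Real.pi) * ∫ α : ℝ,
    deriv (Ls s) (y - α) *
      (((fint α (Ls s) y) ^ 2 - (Ls s y) ^ 2) / (1 + (fint α (Ls s) y) ^ 2)) / α

lemma Ls_hasDerivAt (s y : ℝ) :
    HasDerivAt (Ls s)
      (2 * s / Real.pi * (1 / (1 + ((1 + s ^ 2 / 3) * y) ^ 2) * (1 + s ^ 2 / 3))) y := by
  have h1 : HasDerivAt (fun y : ℝ => (1 + s ^ 2 / 3) * y) (1 + s ^ 2 / 3) y := by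
    simpa using (hasDerivAt_id y).const_mul (1 + s ^ 2 / 3)
  have h2 := (Real.hasDerivAt_arctan ((1 + s ^ 2 / 3) * y)).comp y h1
  show HasDerivAt (fun y => (2 * s / Real.pi) * Real.arctan ((1 + s ^ 2 / 3) * y)) _ y
  simpa [Ls, mul_assoc] using h2.const_mul (2 * s / Real.pi)

lemma deriv_Ls (s y : ℝ) :
    deriv (Ls s) y = 2 * s / Real.pi * (1 / (1 + ((1 + s ^ 2 / 3) * y) ^ 2) * (1 + s ^ 2 / 3)) :=
  (Ls_hasDerivAt s y).deriv

lemma deriv_Ls_nonneg (s : ℝ) (hs : 0 ≤ s) (t : ℝ) : 0 ≤ deriv (Ls s) t := by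
  rw [deriv_Ls]
  refine mul_nonneg (div_nonneg (by linarith) Real.pi_pos.le) (by positivity)

lemma deriv_Ls_le {s : ℝ} (hs : 0 < s) (hs1 : s ≤ 1) (t : ℝ) :
    deriv (Ls s) t ≤ s * (1 + t ^ 2)⁻¹ := by
  rw [deriv_Ls]
  have hpi : (3:ℝ) < Real.pi := Real.pi_gt_three
  have h1 : (1 + ((1 + s ^ 2 / 3) * t) ^ 2)⁻¹ ≤ (1 + t ^ 2)⁻¹ := by
    apply inv_anti₀ (by positivity)
    nlinarith [sq_nonneg (s * t), sq_nonneg (s ^ 2 * t)]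
  have key : 2 * s / Real.pi * (1 + s ^ 2 / 3) ≤ s := by
    rw [div_mul_eq_mul_div, div_le_iff₀ (by positivity)]
    nlinarith
  calc 2 * s / Real.pi * (1 / (1 + ((1 + s ^ 2 / 3) * t) ^ 2) * (1 + s ^ 2 / 3))
      = (2 * s / Real.pi * (1 + s ^ 2 / 3)) * (1 + ((1 + s ^ 2 / 3) * t) ^ 2)⁻¹ := by
        rw [one_div]; ring
    _ ≤ s * (1 + t ^ 2)⁻¹ := by
        apply mul_le_mul key h1 (by positivity) hs.le

lemma deriv_Ls_le_s {s : ℝ} (hs : 0 < s) (hs1 : s ≤ 1) (t : ℝ) : deriv (Ls s) t ≤ s := by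
  have h := deriv_Ls_le hs hs1 t
  have h2 : (1 + t ^ 2)⁻¹ ≤ 1 := by
    rw [inv_le_one₀ (by positivity)]; nlinarith [sq_nonneg t]
  nlinarith [deriv_Ls_nonneg s hs.le t]

lemma Ls_abs_le {s : ℝ} (hs : 0 < s) (t : ℝ) : |Ls s t| ≤ s := by
  rw [Ls, abs_mul]
  have h1 : |2 * s / Real.pi| = 2 * s / Real.pi := abs_of_nonneg (by positivity)
  have h2 : |Real.arctan ((1 + s ^ 2 / 3) * t)| ≤ Real.pi / 2 :=
    abs_le.2 ⟨(Real.neg_pi_div_two_lt_arctan _).le, (Real.arctan_lt_pi_div_two _).le⟩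
  calc |2 * s / Real.pi| * |Real.arctan ((1 + s ^ 2 / 3) * t)|
      ≤ 2 * s / Real.pi * (Real.pi / 2) := by
        rw [h1]; exact mul_le_mul_of_nonneg_left h2 (by positivity)
    _ = s := by field_simp

lemma Ls_continuous (s : ℝ) : Continuous (Ls s) := by
  exact continuous_const.mul (Real.continuous_arctan.comp (continuous_const.mul continuous_id))

lemma fint_abs_le {s : ℝ} (hs : 0 < s) (α y : ℝ) : |fint α (Ls s) y| ≤ s := by
  rcases eq_or_ne α 0 with h | h
  · simp [fint, h]; exact hs.le
  · rw [fint, abs_mul]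
    have hb : ‖∫ z in (y - α)..y, Ls s z‖ ≤ s * |y - (y - α)| :=
      intervalIntegral.norm_integral_le_of_norm_le_const fun z _ => by
        simpa [Real.norm_eq_abs] using Ls_abs_le hs z
    rw [Real.norm_eq_abs, sub_sub_cancel] at hb
    have h1 : |1 / α| = 1 / |α| := by rw [abs_div, abs_one]
    have h2 : 0 < |α| := abs_pos.mpr h
    calc |1 / α| * |∫ z in (y - α)..y, Ls s z| ≤ (1 / |α|) * (s * |α|) := by
          rw [h1]; exact mul_le_mul_of_nonneg_left hb (by positivity)
      _ = s := by field_simp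





lemma fint_sub_eq {α : ℝ} (hα : α ≠ 0) (s y : ℝ) :
    fint α (Ls s) y - Ls s y = (1 / α) * ∫ z in (y - α)..y, (Ls s z - Ls s y) := by
  rw [intervalIntegral.integral_sub ((Ls_continuous s).intervalIntegrable _ _)
    intervalIntegrable_const, intervalIntegral.integral_const, fint, sub_sub_cancel,
    smul_eq_mul]
  field_simp

lemma fint_sub_le {s : ℝ} (hs : 0 < s) {y r M α : ℝ} (hM : 0 ≤ M)
    (hloc : ∀ t ∈ Icc (y - r) (y + r), deriv (Ls s) t ≤ M) (hα : α ≠ 0) (hαr : |α| ≤ r) :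
    |fint α (Ls s) y - Ls s y| ≤ M * |α| := by
  rw [fint_sub_eq hα s y]
  have hymem : y ∈ Icc (y - r) (y + r) := by
    constructor <;> [linarith [abs_nonneg α]; linarith [abs_nonneg α]]
  have key : ∀ z ∈ Set.uIoc (y - α) y, ‖Ls s z - Ls s y‖ ≤ M * |α| := by
    intro z hz
    have hz' : z ∈ Set.uIcc (y - α) y := Set.uIoc_subset_uIcc hz
    have ha1 := le_abs_self α
    have ha2 := neg_abs_le α
    have h1 : y - |α| ≤ z ∧ z ≤ y + |α| := by
      rcases Set.mem_uIcc.mp hz' with ⟨h, h'⟩ | ⟨h, h'⟩ <;> constructor <;> linarith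
    have hzmem : z ∈ Icc (y - r) (y + r) := ⟨by linarith [h1.1], by linarith [h1.2]⟩
    have hzy : |z - y| ≤ |α| := abs_le.2 ⟨by linarith [h1.1], by linarith [h1.2]⟩
    have hlip := (convex_Icc (y - r) (y + r)).norm_image_sub_le_of_norm_deriv_le
      (f := Ls s) (fun x _ => (Ls_hasDerivAt s x).differentiableAt)
      (fun x hx => by
        rw [Real.norm_eq_abs, abs_of_nonneg (deriv_Ls_nonneg s hs.le x)]
        exact hloc x hx) hymem hzmem
    rw [Real.norm_eq_abs] at hlip ⊢
    calc |Ls s z - Ls s y| ≤ M * |z - y| := hlip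
      _ ≤ M * |α| := mul_le_mul_of_nonneg_left hzy hM
  have hnorm := intervalIntegral.norm_integral_le_of_norm_le_const key
  rw [Real.norm_eq_abs, sub_sub_cancel] at hnorm
  have h2 : 0 < |α| := abs_pos.mpr hα
  rw [abs_mul]
  have h1 : |1 / α| = 1 / |α| := by rw [abs_div, abs_one]
  calc |1 / α| * |∫ z in (y - α)..y, (Ls s z - Ls s y)|
      ≤ (1 / |α|) * (M * |α| * |α|) := by
        rw [h1]; exact mul_le_mul_of_nonneg_left hnorm (by positivity)
    _ = M * |α| := by field_simp

lemma RLs_pointwise {s : ℝ} (hs : 0 < s) (hs1 : s ≤ 1) (y r M : ℝ) (hr : 0 < r) (hM : 0 ≤ M)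
    (hloc : ∀ t ∈ Icc (y - r) (y + r), deriv (Ls s) t ≤ M) :
    |RLs s y| ≤ 2 * s ^ 2 * M + 4 * s ^ 3 / r := by
  set G : ℝ → ℝ := fun α => deriv (Ls s) (y - α) *
    ((fint α (Ls s) y ^ 2 - Ls s y ^ 2) / (1 + fint α (Ls s) y ^ 2)) / α with hG
  set c : ℝ := 2 * s * (M + 2 * s / r) with hc
  have hcnn : 0 ≤ c := by positivity
  have hceq : c = 2 * s * M + 4 * s ^ 2 / r := by rw [hc]; ring
  have hbound : ∀ α : ℝ, ‖G α‖ ≤ c * deriv (Ls s) (y - α) := by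
    intro α
    have hD : 0 ≤ deriv (Ls s) (y - α) := deriv_Ls_nonneg s hs.le _
    rcases eq_or_ne α 0 with h0 | h0
    · rw [hG]; simp only [h0, div_zero, norm_zero]
      exact mul_nonneg hcnn (deriv_Ls_nonneg s hs.le _)
    · have hF := fint_abs_le hs α y
      have hL := Ls_abs_le hs y
      have habs := abs_nonneg (fint α (Ls s) y - Ls s y)
      have hq : |(fint α (Ls s) y ^ 2 - Ls s y ^ 2) / (1 + fint α (Ls s) y ^ 2)|
          ≤ 2 * s * |fint α (Ls s) y - Ls s y| := by
        have hden : (0:ℝ) < 1 + fint α (Ls s) y ^ 2 := by positivity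
        have heq : fint α (Ls s) y ^ 2 - Ls s y ^ 2
            = (fint α (Ls s) y - Ls s y) * (fint α (Ls s) y + Ls s y) := by ring
        have h1 : |fint α (Ls s) y ^ 2 - Ls s y ^ 2|
            ≤ |fint α (Ls s) y - Ls s y| * (2 * s) := by
          rw [heq, abs_mul]
          refine mul_le_mul_of_nonneg_left ?_ habs
          calc |fint α (Ls s) y + Ls s y| ≤ |fint α (Ls s) y| + |Ls s y| := abs_add_le _ _
            _ ≤ 2 * s := by linarith
        rw [abs_div, abs_of_pos hden]
        calc |fint α (Ls s) y ^ 2 - Ls s y ^ 2| / (1 + fint α (Ls s) y ^ 2)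
            ≤ |fint α (Ls s) y ^ 2 - Ls s y ^ 2| :=
              div_le_self (abs_nonneg _) (by nlinarith [sq_nonneg (fint α (Ls s) y)])
          _ ≤ 2 * s * |fint α (Ls s) y - Ls s y| := by linarith
      have hα : 0 < |α| := abs_pos.mpr h0
      have hmain : |(fint α (Ls s) y ^ 2 - Ls s y ^ 2) / (1 + fint α (Ls s) y ^ 2)| / |α| ≤ c := by
        rcases le_or_gt |α| r with hle | hlt
        · have hd := fint_sub_le hs hM hloc h0 hle
          have h2 : |(fint α (Ls s) y ^ 2 - Ls s y ^ 2) / (1 + fint α (Ls s) y ^ 2)|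
              ≤ (2 * s * M) * |α| := by
            calc _ ≤ 2 * s * |fint α (Ls s) y - Ls s y| := hq
              _ ≤ 2 * s * (M * |α|) := by
                  exact mul_le_mul_of_nonneg_left hd (by positivity)
              _ = (2 * s * M) * |α| := by ring
          rw [div_le_iff₀ hα]
          calc |(fint α (Ls s) y ^ 2 - Ls s y ^ 2) / (1 + fint α (Ls s) y ^ 2)|
              ≤ (2 * s * M) * |α| := h2
            _ ≤ c * |α| := by
                refine mul_le_mul_of_nonneg_right ?_ hα.le
                rw [hceq]; have : 0 ≤ 4 * s ^ 2 / r := by positivity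
                linarith
        · have hd : |fint α (Ls s) y - Ls s y| ≤ 2 * s := by
            calc |fint α (Ls s) y - Ls s y| ≤ |fint α (Ls s) y| + |Ls s y| := abs_sub _ _
              _ ≤ 2 * s := by linarith
          have h2 : |(fint α (Ls s) y ^ 2 - Ls s y ^ 2) / (1 + fint α (Ls s) y ^ 2)|
              ≤ 4 * s ^ 2 := by
            calc _ ≤ 2 * s * |fint α (Ls s) y - Ls s y| := hq
              _ ≤ 2 * s * (2 * s) := mul_le_mul_of_nonneg_left hd (by positivity)
              _ = 4 * s ^ 2 := by ring
          calc |(fint α (Ls s) y ^ 2 - Ls s y ^ 2) / (1 + fint α (Ls s) y ^ 2)| / |α|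
              ≤ 4 * s ^ 2 / r := div_le_div₀ (by positivity) h2 hr hlt.le
            _ ≤ c := by
                rw [hceq]; have : 0 ≤ 2 * s * M := by positivity
                linarith
      rw [hG, Real.norm_eq_abs]
      simp only []
      rw [abs_div, abs_mul, abs_of_nonneg hD]
      calc deriv (Ls s) (y - α) * |(fint α (Ls s) y ^ 2 - Ls s y ^ 2) /
              (1 + fint α (Ls s) y ^ 2)| / |α|
          = deriv (Ls s) (y - α) * (|(fint α (Ls s) y ^ 2 - Ls s y ^ 2) /
              (1 + fint α (Ls s) y ^ 2)| / |α|) := by ring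
        _ ≤ deriv (Ls s) (y - α) * c := mul_le_mul_of_nonneg_left hmain hD
        _ = c * deriv (Ls s) (y - α) := mul_comm _ _
  have hA0 : (1 + s ^ 2 / 3) ≠ 0 := by positivity
  have hDint0 : Integrable (fun t : ℝ => deriv (Ls s) t) := by
    have heq : (fun t : ℝ => deriv (Ls s) t)
        = fun t => (2 * s / Real.pi * (1 + s ^ 2 / 3)) * (1 + ((1 + s ^ 2 / 3) * t) ^ 2)⁻¹ := by
      funext t; rw [deriv_Ls]; ring
    rw [heq]
    exact ((integrable_comp_mul_left_iff (fun u : ℝ => (1 + u ^ 2)⁻¹) hA0).mpr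
      integrable_inv_one_add_sq).const_mul _
  have hDint : Integrable (fun α : ℝ => deriv (Ls s) (y - α)) :=
    (integrable_comp_sub_left (fun t => deriv (Ls s) t) y).mpr hDint0
  have hInt : (∫ α : ℝ, ‖G α‖) ≤ c * (s * Real.pi) := by
    have step1 : (∫ α : ℝ, ‖G α‖) ≤ ∫ α : ℝ, c * deriv (Ls s) (y - α) :=
      integral_mono_of_nonneg (Eventually.of_forall fun α => norm_nonneg _)
        (hDint.const_mul c) (Eventually.of_forall hbound)
    have step2 : (∫ α : ℝ, c * deriv (Ls s) (y - α)) = c * ∫ t : ℝ, deriv (Ls s) t := by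
      rw [integral_const_mul, integral_sub_left_eq_self]
    have step3 : (∫ t : ℝ, deriv (Ls s) t) ≤ s * Real.pi := by
      calc (∫ t : ℝ, deriv (Ls s) t) ≤ ∫ t : ℝ, s * (1 + t ^ 2)⁻¹ :=
            integral_mono hDint0 (integrable_inv_one_add_sq.const_mul s) (deriv_Ls_le hs hs1)
        _ = s * Real.pi := by rw [integral_const_mul, integral_univ_inv_one_add_sq]
    calc (∫ α : ℝ, ‖G α‖) ≤ c * ∫ t : ℝ, deriv (Ls s) t := by rw [← step2]; exact step1
      _ ≤ c * (s * Real.pi) := mul_le_mul_of_nonneg_left step3 hcnn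
  have hRL : |RLs s y| = (1 / Real.pi) * |∫ α : ℝ, G α| := by
    rw [RLs, abs_mul, abs_neg, abs_of_nonneg (by positivity : (0:ℝ) ≤ 1 / Real.pi)]
  have hpi : (0:ℝ) < Real.pi := Real.pi_pos
  calc |RLs s y| = (1 / Real.pi) * |∫ α : ℝ, G α| := hRL
    _ ≤ (1 / Real.pi) * (c * (s * Real.pi)) := by
        refine mul_le_mul_of_nonneg_left ?_ (by positivity)
        calc |∫ α : ℝ, G α| = ‖∫ α : ℝ, G α‖ := (Real.norm_eq_abs _).symm
          _ ≤ ∫ α : ℝ, ‖G α‖ := norm_integral_le_integral_norm G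
          _ ≤ c * (s * Real.pi) := hInt
    _ = 2 * s ^ 2 * M + 4 * s ^ 3 / r := by
        rw [hc]; field_simp; ring

lemma RLs_decay {s : ℝ} (hs : 0 < s) (hs1 : s ≤ 1) (y : ℝ) :
    |RLs s y| ≤ 24 * s ^ 3 / (1 + |y|) := by
  rcases le_or_gt |y| 2 with hy | hy
  · have h := RLs_pointwise hs hs1 y 1 s one_pos hs.le (fun t _ => deriv_Ls_le_s hs hs1 t)
    have h1 : 1 + |y| ≤ 3 := by linarith
    have h0 : (0:ℝ) < 1 + |y| := by positivity
    have h2 : 6 * s ^ 3 ≤ 24 * s ^ 3 / (1 + |y|) := by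
      rw [le_div_iff₀ h0]
      nlinarith [pow_pos hs 3]
    calc |RLs s y| ≤ 2 * s ^ 2 * s + 4 * s ^ 3 / 1 := h
      _ = 6 * s ^ 3 := by ring
      _ ≤ _ := h2
  · have hy0 : (0:ℝ) < |y| := by linarith
    have hyne : y ≠ 0 := by intro h; rw [h, abs_zero] at hy0; exact lt_irrefl 0 hy0
    have hM : ∀ t ∈ Icc (y - |y| / 2) (y + |y| / 2), deriv (Ls s) t ≤ 4 * s / y ^ 2 := by
      intro t ht
      obtain ⟨ht1, ht2⟩ := ht
      have h1 : |y| / 2 ≤ |t| := by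
        rcases le_or_gt 0 y with h | h
        · have hay : |y| = y := abs_of_nonneg h
          rw [hay] at ht1 ⊢
          calc y / 2 ≤ t := by linarith
            _ ≤ |t| := le_abs_self t
        · have hay : |y| = -y := abs_of_neg h
          rw [hay] at ht2 ⊢
          calc -y / 2 ≤ -t := by linarith
            _ ≤ |t| := neg_le_abs t
      have ht2' : y ^ 2 / 4 ≤ t ^ 2 := by
        have := mul_self_le_mul_self (by positivity) h1
        have hyy : |y| * |y| = y ^ 2 := by rw [← abs_mul, abs_mul_self]; ring
        have htt : |t| * |t| = t ^ 2 := by rw [← abs_mul, abs_mul_self]; ring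
        nlinarith
      have h2 := deriv_Ls_le hs hs1 t
      have h3 : s * (1 + t ^ 2)⁻¹ ≤ 4 * s / y ^ 2 := by
        rw [← div_eq_mul_inv, div_le_div_iff₀ (by positivity) (by positivity)]
        nlinarith
      linarith
    have h := RLs_pointwise hs hs1 y (|y| / 2) (4 * s / y ^ 2) (by positivity) (by positivity) hM
    have hyy : y ^ 2 = |y| ^ 2 := (sq_abs y).symm
    have e0 : 2 * s ^ 2 * (4 * s / y ^ 2) + 4 * s ^ 3 / (|y| / 2)
        = 8 * s ^ 3 / y ^ 2 + 8 * s ^ 3 / |y| := by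
      rw [div_div_eq_mul_div]
      ring
    have e1 : 8 * s ^ 3 / y ^ 2 ≤ 4 * s ^ 3 / |y| := by
      rw [hyy, div_le_div_iff₀ (by positivity) hy0]
      nlinarith [pow_pos hs 3, mul_nonneg (by linarith : (0:ℝ) ≤ |y| - 2) hy0.le]
    have e2 : 12 * s ^ 3 / |y| ≤ 24 * s ^ 3 / (1 + |y|) := by
      rw [div_le_div_iff₀ hy0 (by positivity)]
      nlinarith [pow_pos hs 3]
    calc |RLs s y| ≤ 2 * s ^ 2 * (4 * s / y ^ 2) + 4 * s ^ 3 / (|y| / 2) := h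
      _ = 8 * s ^ 3 / y ^ 2 + 8 * s ^ 3 / |y| := e0
      _ ≤ 12 * s ^ 3 / |y| := by
          have : 8 * s ^ 3 / |y| + 4 * s ^ 3 / |y| = 12 * s ^ 3 / |y| := by ring
          linarith
      _ ≤ _ := e2


/-- `R[L_s]` is of size `s³` in `L^{4/3} ∩ L²`. -/
theorem RLs_bound :
    ∃ C : ℝ, 0 < C ∧ ∀ s : ℝ, 0 < s → s ≤ 1 →
      (∫ y : ℝ, |RLs s y| ^ ((4:ℝ)/3)) ^ ((3:ℝ)/4)
        + (∫ y : ℝ, |RLs s y| ^ 2) ^ ((1:ℝ)/2) ≤ C * s ^ 3 := by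
  have hint1 : Integrable (fun y : ℝ => (1 + ‖y‖) ^ (-(4/3 : ℝ))) :=
    integrable_one_add_norm (by norm_num)
  have hint2 : Integrable (fun y : ℝ => (1 + ‖y‖) ^ (-(2 : ℝ))) :=
    integrable_one_add_norm (by norm_num)
  set K1 : ℝ := ∫ y : ℝ, (1 + ‖y‖) ^ (-(4/3 : ℝ)) with hK1
  set K2 : ℝ := ∫ y : ℝ, (1 + ‖y‖) ^ (-(2 : ℝ)) with hK2
  have hK1n : 0 ≤ K1 := integral_nonneg fun y => Real.rpow_nonneg (by positivity) _
  have hK2n : 0 ≤ K2 := integral_nonneg fun y => Real.rpow_nonneg (by positivity) _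
  have hK1p : 0 ≤ K1 ^ ((3:ℝ)/4) := Real.rpow_nonneg hK1n _
  have hK2p : 0 ≤ K2 ^ ((1:ℝ)/2) := Real.rpow_nonneg hK2n _
  refine ⟨24 * (K1 ^ ((3:ℝ)/4) + K2 ^ ((1:ℝ)/2)) + 1, by linarith, ?_⟩
  intro s hs hs1
  set B : ℝ := 24 * s ^ 3 with hB
  have hBpos : 0 < B := by positivity
  have hptw : ∀ y : ℝ, |RLs s y| ≤ B * (1 + |y|)⁻¹ := by
    intro y
    have := RLs_decay hs hs1 y
    rw [div_eq_mul_inv] at this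
    exact this
  have hI1 : (∫ y : ℝ, |RLs s y| ^ ((4:ℝ)/3)) ≤ B ^ ((4:ℝ)/3) * K1 := by
    have hb : ∀ y : ℝ, |RLs s y| ^ ((4:ℝ)/3) ≤ B ^ ((4:ℝ)/3) * (1 + ‖y‖) ^ (-(4/3 : ℝ)) := by
      intro y
      have h0 : (0:ℝ) < 1 + |y| := by positivity
      have h2 : |RLs s y| ^ ((4:ℝ)/3) ≤ (B * (1 + |y|)⁻¹) ^ ((4:ℝ)/3) :=
        Real.rpow_le_rpow (abs_nonneg _) (hptw y) (by norm_num)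
      have h3 : (B * (1 + |y|)⁻¹) ^ ((4:ℝ)/3)
          = B ^ ((4:ℝ)/3) * (1 + |y|) ^ (-(4/3 : ℝ)) := by
        rw [Real.mul_rpow hBpos.le (by positivity), Real.inv_rpow h0.le,
          ← Real.rpow_neg h0.le]
      rw [Real.norm_eq_abs]
      calc |RLs s y| ^ ((4:ℝ)/3) ≤ (B * (1 + |y|)⁻¹) ^ ((4:ℝ)/3) := h2
        _ = B ^ ((4:ℝ)/3) * (1 + |y|) ^ (-(4/3 : ℝ)) := h3
    calc (∫ y : ℝ, |RLs s y| ^ ((4:ℝ)/3))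
        ≤ ∫ y : ℝ, B ^ ((4:ℝ)/3) * (1 + ‖y‖) ^ (-(4/3 : ℝ)) :=
          integral_mono_of_nonneg
            (Eventually.of_forall fun y => Real.rpow_nonneg (abs_nonneg _) _)
            (hint1.const_mul _) (Eventually.of_forall hb)
      _ = B ^ ((4:ℝ)/3) * K1 := by rw [integral_const_mul]
  have hI2 : (∫ y : ℝ, |RLs s y| ^ 2) ≤ B ^ 2 * K2 := by
    have hb : ∀ y : ℝ, |RLs s y| ^ 2 ≤ B ^ 2 * (1 + ‖y‖) ^ (-(2 : ℝ)) := by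
      intro y
      have h0 : (0:ℝ) < 1 + |y| := by positivity
      have h2 : |RLs s y| ^ 2 ≤ (B * (1 + |y|)⁻¹) ^ 2 :=
        pow_le_pow_left₀ (abs_nonneg _) (hptw y) 2
      have h3 : (B * (1 + |y|)⁻¹) ^ 2 = B ^ 2 * (1 + |y|) ^ (-(2 : ℝ)) := by
        rw [Real.rpow_neg h0.le, show ((2:ℝ)) = ((2:ℕ) : ℝ) by norm_num,
          Real.rpow_natCast, mul_pow, inv_pow]
      rw [Real.norm_eq_abs]
      calc |RLs s y| ^ 2 ≤ (B * (1 + |y|)⁻¹) ^ 2 := h2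
        _ = B ^ 2 * (1 + |y|) ^ (-(2 : ℝ)) := h3
    calc (∫ y : ℝ, |RLs s y| ^ 2)
        ≤ ∫ y : ℝ, B ^ 2 * (1 + ‖y‖) ^ (-(2 : ℝ)) :=
          integral_mono_of_nonneg
            (Eventually.of_forall fun y => sq_nonneg _)
            (hint2.const_mul _) (Eventually.of_forall hb)
      _ = B ^ 2 * K2 := by rw [integral_const_mul]
  have c1 : (∫ y : ℝ, |RLs s y| ^ ((4:ℝ)/3)) ^ ((3:ℝ)/4) ≤ B * K1 ^ ((3:ℝ)/4) := by
    have hI1' := Real.rpow_le_rpow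
      (integral_nonneg fun y => Real.rpow_nonneg (abs_nonneg _) _) hI1
      (by norm_num : (0:ℝ) ≤ 3/4)
    have heq : (B ^ ((4:ℝ)/3) * K1) ^ ((3:ℝ)/4) = B * K1 ^ ((3:ℝ)/4) := by
      rw [Real.mul_rpow (Real.rpow_nonneg hBpos.le _) hK1n, ← Real.rpow_mul hBpos.le]
      norm_num
    calc (∫ y : ℝ, |RLs s y| ^ ((4:ℝ)/3)) ^ ((3:ℝ)/4)
        ≤ (B ^ ((4:ℝ)/3) * K1) ^ ((3:ℝ)/4) := hI1'
      _ = B * K1 ^ ((3:ℝ)/4) := heq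
  have c2 : (∫ y : ℝ, |RLs s y| ^ 2) ^ ((1:ℝ)/2) ≤ B * K2 ^ ((1:ℝ)/2) := by
    have hI2' := Real.rpow_le_rpow
      (integral_nonneg fun y => sq_nonneg _) hI2 (by norm_num : (0:ℝ) ≤ 1/2)
    have heq : ((B ^ 2 : ℝ) * K2) ^ ((1:ℝ)/2) = B * K2 ^ ((1:ℝ)/2) := by
      rw [Real.mul_rpow (by positivity) hK2n, ← Real.rpow_natCast B 2,
        ← Real.rpow_mul hBpos.le]
      norm_num
    calc (∫ y : ℝ, |RLs s y| ^ 2) ^ ((1:ℝ)/2) ≤ ((B ^ 2 : ℝ) * K2) ^ ((1:ℝ)/2) := hI2'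
      _ = B * K2 ^ ((1:ℝ)/2) := heq
  have hs3 : 0 < s ^ 3 := pow_pos hs 3
  calc (∫ y : ℝ, |RLs s y| ^ ((4:ℝ)/3)) ^ ((3:ℝ)/4) + (∫ y : ℝ, |RLs s y| ^ 2) ^ ((1:ℝ)/2)
      ≤ B * K1 ^ ((3:ℝ)/4) + B * K2 ^ ((1:ℝ)/2) := add_le_add c1 c2
    _ = (24 * (K1 ^ ((3:ℝ)/4) + K2 ^ ((1:ℝ)/2))) * s ^ 3 := by rw [hB]; ring
    _ ≤ (24 * (K1 ^ ((3:ℝ)/4) + K2 ^ ((1:ℝ)/2)) + 1) * s ^ 3 := by nlinarith
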